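/- Let u, v be linearly independent unit vectors in ℝ² and let f = (f₁, f₂) be a vector field on ℝ² with f₁, f₂ ∈ C²_c(ℝ²) such that curl f(x) = 0 for all x ∈ ℝ². If T f(x) = 0 for all x ∈ ℝ², then f = 0 identically. That is, the transverse V-line transform is injective on compactly supported curl-free vector fields. -/

import Mathlib

open MeasureTheory Matrix

noncomputable section

/-- Dot product on ℝ². -/
def dot2 (u v : ℝ × ℝ) : ℝ := u.1 * v.1 + u.2 * v.2

/-- `x^⊥ = (-x₂, x₁)`. -/
def perp2 (x : ℝ × ℝ) : ℝ × ℝ := (-x.2, x.1)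

/-- Divergent beam transform `X_u h (x) = ∫₀^∞ h(x + t u) dt`. -/
def Xbeam (u : ℝ × ℝ) (h : ℝ × ℝ → ℝ) (x : ℝ × ℝ) : ℝ :=
  ∫ t in Set.Ioi (0 : ℝ), h (x + t • u)

/-- First moment divergent beam transform `X¹_u h (x) = ∫₀^∞ t h(x + t u) dt`. -/
def Xmom (u : ℝ × ℝ) (h : ℝ × ℝ → ℝ) (x : ℝ × ℝ) : ℝ :=
  ∫ t in Set.Ioi (0 : ℝ), t * h (x + t • u)

/-- Directional derivative `D_u h = u · ∇ h`. -/
def Ddir (u : ℝ × ℝ) (h : ℝ × ℝ → ℝ) (x : ℝ × ℝ) : ℝ := fderiv ℝ h x u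

/-- Twice continuously differentiable, compactly supported. -/
def IsC2c (h : ℝ × ℝ → ℝ) : Prop := ContDiff ℝ 2 h ∧ HasCompactSupport h

/-- `div f = ∂f₁/∂x₁ + ∂f₂/∂x₂`. -/
def divf (f₁ f₂ : ℝ × ℝ → ℝ) (x : ℝ × ℝ) : ℝ :=
  fderiv ℝ f₁ x (1, 0) + fderiv ℝ f₂ x (0, 1)

/-- `curl f = ∂f₂/∂x₁ - ∂f₁/∂x₂`. -/
def curlf (f₁ f₂ : ℝ × ℝ → ℝ) (x : ℝ × ℝ) : ℝ :=
  fderiv ℝ f₂ x (1, 0) - fderiv ℝ f₁ x (0, 1)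

/-- Longitudinal V-line transform `L f = -X_u (f·u) + X_v (f·v)`. -/
def VlineL (u v : ℝ × ℝ) (f₁ f₂ : ℝ × ℝ → ℝ) (x : ℝ × ℝ) : ℝ :=
  - Xbeam u (fun y => f₁ y * u.1 + f₂ y * u.2) x
  + Xbeam v (fun y => f₁ y * v.1 + f₂ y * v.2) x

/-- Transverse V-line transform `T f = -X_u (f·u^⊥) + X_v (f·v^⊥)`. -/
def VlineT (u v : ℝ × ℝ) (f₁ f₂ : ℝ × ℝ → ℝ) (x : ℝ × ℝ) : ℝ :=
  - Xbeam u (fun y => f₁ y * (perp2 u).1 + f₂ y * (perp2 u).2) x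
  + Xbeam v (fun y => f₁ y * (perp2 v).1 + f₂ y * (perp2 v).2) x

/-- First moment longitudinal V-line transform `I f = -X¹_u (f·u) + X¹_v (f·v)`. -/
def VmomL (u v : ℝ × ℝ) (f₁ f₂ : ℝ × ℝ → ℝ) (x : ℝ × ℝ) : ℝ :=
  - Xmom u (fun y => f₁ y * u.1 + f₂ y * u.2) x
  + Xmom v (fun y => f₁ y * v.1 + f₂ y * v.2) x

/-- First moment transverse V-line transform `J f = -X¹_u (f·u^⊥) + X¹_v (f·v^⊥)`. -/
def VmomT (u v : ℝ × ℝ) (f₁ f₂ : ℝ × ℝ → ℝ) (x : ℝ × ℝ) : ℝ :=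
  - Xmom u (fun y => f₁ y * (perp2 u).1 + f₂ y * (perp2 u).2) x
  + Xmom v (fun y => f₁ y * (perp2 v).1 + f₂ y * (perp2 v).2) x

/-- Radon transform `R h (ψ, s) = ∫_ℝ h (s ψ + t ψ^⊥) dt`. -/
def Radon2 (h : ℝ × ℝ → ℝ) (ψ : ℝ × ℝ) (s : ℝ) : ℝ :=
  ∫ t : ℝ, h (s • ψ + t • perp2 ψ)

/-- The (vector-valued) star transform. -/
def starS (m : ℕ) (γ : Fin m → ℝ × ℝ) (c : Fin m → ℝ)
    (f₁ f₂ : ℝ × ℝ → ℝ) (x : ℝ × ℝ) : ℝ × ℝ :=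
  ∑ i, c i •
    (Xbeam (γ i) (fun y => f₁ y * (γ i).1 + f₂ y * (γ i).2) x,
     Xbeam (γ i) (fun y => f₁ y * (perp2 (γ i)).1 + f₂ y * (perp2 (γ i)).2) x)

/-- `γ(ψ) = -∑ cᵢ γᵢ / (ψ·γᵢ)`. -/
def starGamma (m : ℕ) (γ : Fin m → ℝ × ℝ) (c : Fin m → ℝ) (ψ : ℝ × ℝ) : ℝ × ℝ :=
  - ∑ i, (c i / dot2 ψ (γ i)) • γ i

/-- A star configuration is symmetric if `m = 2k` and, after re-indexing by a
permutation, `γᵢ = -γ_{k+i}` and `cᵢ = -c_{k+i}` for `i = 1, …, k`. -/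
def StarSymmetric (m : ℕ) (γ : Fin m → ℝ × ℝ) (c : Fin m → ℝ) : Prop :=
  ∃ k : ℕ, ∃ hk : m = 2 * k, ∃ σ : Equiv.Perm (Fin m),
    ∀ i : Fin m, ∀ hi : (i : ℕ) < k,
      γ (σ i) = - γ (σ ⟨(i : ℕ) + k, by omega⟩) ∧
      c (σ i) = - c (σ ⟨(i : ℕ) + k, by omega⟩)


section Stmt5Aux

open Set Metric Filter

lemma norm_ge_half {u : ℝ × ℝ} (hu : u.1 ^ 2 + u.2 ^ 2 = 1) : (1:ℝ)/2 ≤ ‖u‖ := by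
  by_contra hlt
  push_neg at hlt
  have h1 : |u.1| ≤ ‖u‖ := by simpa [Real.norm_eq_abs] using norm_fst_le u
  have h2 : |u.2| ≤ ‖u‖ := by simpa [Real.norm_eq_abs] using norm_snd_le u
  have h0 : (0:ℝ) ≤ ‖u‖ := norm_nonneg u
  nlinarith [sq_abs u.1, sq_abs u.2, abs_nonneg u.1, abs_nonneg u.2]

lemma support_bound {E : Type*} [NormedAddCommGroup E] {G : ℝ × ℝ → E}
    (hG : HasCompactSupport G) : ∃ M : ℝ, 0 ≤ M ∧ ∀ y, M < ‖y‖ → G y = 0 := by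
  obtain ⟨M, hM⟩ := hG.isBounded.subset_closedBall 0
  refine ⟨max M 0, le_max_right _ _, fun y hy => ?_⟩
  by_contra hne
  have : y ∈ tsupport G := subset_tsupport G (by simpa [Function.mem_support] using hne)
  have := hM this
  rw [mem_closedBall_zero_iff] at this
  have : ‖y‖ ≤ max M 0 := le_trans this (le_max_left _ _)
  linarith

lemma ray_zero {E : Type*} [NormedAddCommGroup E] {u : ℝ × ℝ} (hu : (1:ℝ)/2 ≤ ‖u‖)
    {G : ℝ × ℝ → E} {M : ℝ} (hM : ∀ y, M < ‖y‖ → G y = 0) (x : ℝ × ℝ) {t : ℝ}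
    (ht : 2*(M + ‖x‖) < |t|) : G (x + t • u) = 0 := by
  apply hM
  have h1 : ‖t • u‖ ≤ ‖x + t • u‖ + ‖x‖ := by
    calc ‖t • u‖ = ‖(x + t • u) - x‖ := by rw [add_sub_cancel_left]
      _ ≤ ‖x + t • u‖ + ‖x‖ := norm_sub_le _ _
  rw [norm_smul, Real.norm_eq_abs] at h1
  nlinarith [abs_nonneg t, norm_nonneg x, norm_nonneg (x + t • u)]

lemma ray_integrable {E : Type*} [NormedAddCommGroup E] {u : ℝ × ℝ}
    (hu : (1:ℝ)/2 ≤ ‖u‖) {G : ℝ × ℝ → E} (hGc : Continuous G)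
    (hGs : HasCompactSupport G) (x : ℝ × ℝ) :
    IntegrableOn (fun t : ℝ => G (x + t • u)) (Set.Ioi 0) := by
  obtain ⟨M, hM0, hM⟩ := support_bound hGs
  have hcont : Continuous (fun t : ℝ => G (x + t • u)) :=
    hGc.comp (continuous_const.add (continuous_id.smul continuous_const))
  have hsupp : HasCompactSupport (fun t : ℝ => G (x + t • u)) := by
    apply HasCompactSupport.intro (isCompact_Icc
      (a := -(2*(M + ‖x‖)+1)) (b := 2*(M + ‖x‖)+1))
    intro t ht
    refine ray_zero hu hM x ?_
    rw [Set.mem_Icc] at ht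
    rcases abs_cases t with ⟨he, _⟩ | ⟨he, _⟩ <;> rw [he] <;> by_contra hc <;>
      push_neg at hc <;> exact ht ⟨by linarith, by linarith⟩
  exact (hcont.integrable_of_hasCompactSupport hsupp).integrableOn

lemma xbeam_hasFDerivAt {u : ℝ × ℝ} (hu : (1:ℝ)/2 ≤ ‖u‖) {h : ℝ × ℝ → ℝ}
    (hc : ContDiff ℝ 1 h) (hs : HasCompactSupport h) (x₀ : ℝ × ℝ) :
    HasFDerivAt (Xbeam u h) (∫ t in Set.Ioi (0:ℝ), fderiv ℝ h (x₀ + t • u)) x₀ := by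
  obtain ⟨K, hK⟩ := hc.lipschitzWith_of_hasCompactSupport hs (by norm_num)
  obtain ⟨M, hM0, hM⟩ := support_bound hs
  set R : ℝ := 2*(M + (‖x₀‖ + 1)) with hR
  have hR0 : 0 ≤ R := by positivity
  have key : ∀ x ∈ Metric.ball x₀ 1, ∀ t : ℝ, R < |t| → h (x + t • u) = 0 := by
    intro x hx t ht
    apply ray_zero hu hM
    have hxx : ‖x‖ ≤ ‖x₀‖ + 1 := by
      have h1 : ‖x - x₀‖ < 1 := by rwa [mem_ball_iff_norm] at hx
      have h2 : ‖x‖ ≤ ‖x₀‖ + ‖x - x₀‖ := by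
        have : x = x₀ + (x - x₀) := by abel
        nth_rewrite 1 [this]
        exact norm_add_le _ _
      linarith
    calc 2*(M + ‖x‖) ≤ R := by rw [hR]; linarith
      _ < |t| := ht
  have main := hasFDerivAt_integral_of_dominated_loc_of_lip
      (μ := volume.restrict (Set.Ioi (0:ℝ)))
      (F := fun (x : ℝ × ℝ) (t : ℝ) => h (x + t • u))
      (F' := fun t : ℝ => fderiv ℝ h (x₀ + t • u))
      (x₀ := x₀)
      (bound := Set.indicator (Set.Icc (-R) R) (fun _ => (K:ℝ)))
      (s := Metric.ball x₀ 1) (Metric.ball_mem_nhds x₀ one_pos) ?_ ?_ ?_ ?_ ?_ ?_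
  · exact main.2
  · refine Filter.Eventually.of_forall fun x => ?_
    exact ((hc.continuous.comp
      (continuous_const.add (continuous_id.smul continuous_const)))).aestronglyMeasurable
  · exact ray_integrable hu hc.continuous hs x₀
  · exact ((hc.continuous_fderiv (by norm_num)).comp
      (continuous_const.add (continuous_id.smul continuous_const))).aestronglyMeasurable
  · refine Filter.Eventually.of_forall fun t => ?_
    by_cases htR : |t| ≤ R
    · rw [Set.indicator_of_mem (Set.mem_Icc.mpr (abs_le.mp htR))]
      have hnn : Real.nnabs ((K:ℝ)) = K := by
        apply NNReal.coe_injective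
        simp [Real.coe_nnabs, abs_of_nonneg K.2]
      rw [hnn]
      have hlip : LipschitzWith K (fun x : ℝ × ℝ => h (x + t • u)) := by
        have := hK.comp (LipschitzWith.of_dist_le_mul
          (f := fun x : ℝ × ℝ => x + t • u) (K := 1)
          (fun a b => by simp [dist_eq_norm]))
        rw [mul_one] at this
        exact this
      exact fun a _ b _ => hlip _ _
    · rw [Set.indicator_of_notMem (by rwa [Set.mem_Icc, ← abs_le])]
      push_neg at htR
      rw [lipschitzOnWith_iff_dist_le_mul]
      intro a ha b hb
      show dist (h (a + t • u)) (h (b + t • u)) ≤ _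
      rw [key a ha t htR, key b hb t htR]
      simp
  · have hbi : Integrable (Set.indicator (Set.Icc (-R) R) (fun _ => (K:ℝ))) volume := by
      rw [integrable_indicator_iff measurableSet_Icc]
      exact (integrableOn_const_iff (by simp)).mpr (Or.inr measure_Icc_lt_top)
    exact hbi.restrict
  · refine Filter.Eventually.of_forall fun t => ?_
    have h1 : HasFDerivAt (fun x : ℝ × ℝ => x + t • u)
        (ContinuousLinearMap.id ℝ (ℝ × ℝ)) x₀ := (hasFDerivAt_id x₀).add_const (t • u)
    have h2 := (hc.differentiable (by norm_num) (x₀ + t • u)).hasFDerivAt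
    simpa [Function.comp_def] using h2.comp x₀ h1

lemma xbeam_fderiv_ray {u : ℝ × ℝ} (hu : (1:ℝ)/2 ≤ ‖u‖) {h : ℝ × ℝ → ℝ}
    (hc : ContDiff ℝ 1 h) (hs : HasCompactSupport h) (x : ℝ × ℝ) :
    ∫ t in Set.Ioi (0:ℝ), fderiv ℝ h (x + t • u) u = - h x := by
  obtain ⟨M, hM0, hM⟩ := support_bound hs
  have hderiv : ∀ t ∈ Set.Ioi (0:ℝ),
      HasDerivAt (fun s : ℝ => h (x + s • u)) (fderiv ℝ h (x + t • u) u) t := by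
    intro t _
    have h1 : HasDerivAt (fun s : ℝ => x + s • u) u t := by
      simpa using ((hasDerivAt_id t).smul_const u).const_add x
    exact (hc.differentiable (by norm_num) _).hasFDerivAt.comp_hasDerivAt t h1
  have hint : IntegrableOn (fun t : ℝ => fderiv ℝ h (x + t • u) u) (Set.Ioi 0) := by
    have hcc : Continuous (fun y : ℝ × ℝ => fderiv ℝ h y u) :=
      (hc.continuous_fderiv (by norm_num)).clm_apply continuous_const
    exact ray_integrable hu hcc (hs.fderiv_apply ℝ u) x
  have htend : Filter.Tendsto (fun t : ℝ => h (x + t • u)) Filter.atTop (nhds 0) := by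
    apply Filter.Tendsto.congr' _ tendsto_const_nhds
    filter_upwards [Filter.eventually_ge_atTop (2*(M + ‖x‖) + 1)] with t ht
    refine (ray_zero hu hM x ?_).symm
    have ht0 : 0 ≤ t := by nlinarith [norm_nonneg x]
    rw [abs_of_nonneg ht0]; linarith
  have hcont : ContinuousWithinAt (fun s : ℝ => h (x + s • u)) (Set.Ici 0) 0 :=
    ((hc.continuous.comp
      (continuous_const.add (continuous_id.smul continuous_const)))).continuousWithinAt
  have h0 := MeasureTheory.integral_Ioi_of_hasDerivAt_of_tendsto hcont hderiv hint htend
  simpa using h0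

lemma clm_expand (L : (ℝ × ℝ) →L[ℝ] ℝ) (w : ℝ × ℝ) :
    L w = w.1 * L (1,0) + w.2 * L (0,1) := by
  have hw : w = w.1 • ((1:ℝ),(0:ℝ)) + w.2 • ((0:ℝ),(1:ℝ)) := by
    ext <;> simp
  nth_rewrite 1 [hw]
  rw [map_add, L.map_smul, L.map_smul, smul_eq_mul, smul_eq_mul]

lemma det_ne_zero {u v : ℝ × ℝ} (hu : u.1 ^ 2 + u.2 ^ 2 = 1)
    (huv : LinearIndependent ℝ ![u, v]) : u.1 * v.2 - u.2 * v.1 ≠ 0 := by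
  intro h0
  rw [LinearIndependent.pair_iff] at huv
  have h1 : v.2 • u + (-u.2) • v = 0 := by
    rw [Prod.ext_iff]
    constructor <;> simp <;> nlinarith [h0]
  have h2 : (-v.1) • u + u.1 • v = 0 := by
    rw [Prod.ext_iff]
    constructor <;> simp <;> nlinarith [h0]
  obtain ⟨e1, e2⟩ := huv _ _ h1
  obtain ⟨e3, e4⟩ := huv _ _ h2
  have : u.2 = 0 := by linarith [neg_eq_zero.mp e2]
  nlinarith

end Stmt5Aux

/-- `T` is injective on compactly supported curl-free fields. -/
theorem stmt5 (u v : ℝ × ℝ) (hu : u.1 ^ 2 + u.2 ^ 2 = 1) (hv : v.1 ^ 2 + v.2 ^ 2 = 1)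
    (huv : LinearIndependent ℝ ![u, v])
    (f₁ f₂ : ℝ × ℝ → ℝ) (hf₁ : IsC2c f₁) (hf₂ : IsC2c f₂)
    (hcurl : ∀ x, curlf f₁ f₂ x = 0)
    (hT : ∀ x, VlineT u v f₁ f₂ x = 0) :
    ∀ x, f₁ x = 0 ∧ f₂ x = 0 := by
  have hun := norm_ge_half hu
  have hvn := norm_ge_half hv
  have hdet : u.1 * v.2 - u.2 * v.1 ≠ 0 := det_ne_zero hu huv
  obtain ⟨hf₁c, hf₁s⟩ := hf₁
  obtain ⟨hf₂c, hf₂s⟩ := hf₂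
  have one_le_two' : (1 : WithTop ℕ∞) ≤ 2 := by norm_num
  have hf₁d : ∀ p, DifferentiableAt ℝ f₁ p := fun p => (hf₁c.differentiable (by norm_num)) p
  have hf₂d : ∀ p, DifferentiableAt ℝ f₂ p := fun p => (hf₂c.differentiable (by norm_num)) p
  simp only [VlineT] at hT
  set gU : ℝ × ℝ → ℝ := fun y => f₁ y * (perp2 u).1 + f₂ y * (perp2 u).2 with hgUdef
  set gV : ℝ × ℝ → ℝ := fun y => f₁ y * (perp2 v).1 + f₂ y * (perp2 v).2 with hgVdef
  have hgUc : ContDiff ℝ 2 gU := (hf₁c.mul contDiff_const).add (hf₂c.mul contDiff_const)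
  have hgVc : ContDiff ℝ 2 gV := (hf₁c.mul contDiff_const).add (hf₂c.mul contDiff_const)
  have hgUs : HasCompactSupport gU := (hf₁s.mul_right).add (hf₂s.mul_right)
  have hgVs : HasCompactSupport gV := (hf₁s.mul_right).add (hf₂s.mul_right)
  have hgUc1 : ContDiff ℝ 1 gU := hgUc.of_le one_le_two'
  have hgVc1 : ContDiff ℝ 1 gV := hgVc.of_le one_le_two'
  -- Step 1: first derivative of the transform
  have key1 : ∀ (x : ℝ × ℝ) (w : ℝ × ℝ),
      (∫ t in Set.Ioi (0:ℝ), fderiv ℝ gU (x + t • u) w)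
        = ∫ t in Set.Ioi (0:ℝ), fderiv ℝ gV (x + t • v) w := by
    intro x w
    have hA := xbeam_hasFDerivAt hun hgUc1 hgUs x
    have hB := xbeam_hasFDerivAt hvn hgVc1 hgVs x
    have hAB : HasFDerivAt (fun y => - Xbeam u gU y + Xbeam v gV y)
        (-(∫ t in Set.Ioi (0:ℝ), fderiv ℝ gU (x + t • u))
          + ∫ t in Set.Ioi (0:ℝ), fderiv ℝ gV (x + t • v)) x := hA.neg.add hB
    have hzero : HasFDerivAt (fun y => - Xbeam u gU y + Xbeam v gV y)
        (0 : (ℝ × ℝ) →L[ℝ] ℝ) x := by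
      have he : (fun y => - Xbeam u gU y + Xbeam v gV y) = fun _ => (0:ℝ) := funext hT
      rw [he]; exact hasFDerivAt_const 0 x
    have heq := hAB.unique hzero
    have happ := DFunLike.congr_fun heq w
    rw [ContinuousLinearMap.add_apply, ContinuousLinearMap.neg_apply,
        ContinuousLinearMap.zero_apply,
        ContinuousLinearMap.integral_apply
          (ray_integrable hun (hgUc1.continuous_fderiv (by norm_num)) (hgUs.fderiv (𝕜 := ℝ)) x) w,
        ContinuousLinearMap.integral_apply
          (ray_integrable hvn (hgVc1.continuous_fderiv (by norm_num)) (hgVs.fderiv (𝕜 := ℝ)) x) w] at happ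
    linarith
  -- Step 2
  have key2 : ∀ x, Xbeam u (fun y => fderiv ℝ gU y v) x = - gV x := by
    intro x
    have h1 := key1 x v
    have h2 := xbeam_fderiv_ray hvn hgVc1 hgVs x
    show (∫ t in Set.Ioi (0:ℝ), fderiv ℝ gU (x + t • u) v) = - gV x
    rw [h1, h2]
  have hUc : ContDiff ℝ 1 (fun y => fderiv ℝ gU y v) :=
    (hgUc.fderiv_right (m := 1) (by norm_num)).clm_apply contDiff_const
  have hUs : HasCompactSupport (fun y => fderiv ℝ gU y v) := hgUs.fderiv_apply ℝ v
  -- Step 3: mixed second derivatives agree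
  have key3 : ∀ x, fderiv ℝ gU x v = fderiv ℝ gV x u := by
    intro x
    have hA := xbeam_hasFDerivAt hun hUc hUs x
    have hgVd : HasFDerivAt (fun y => - gV y) (-(fderiv ℝ gV x)) x :=
      ((hgVc.differentiable (by norm_num)) x).hasFDerivAt.neg
    have hfun : Xbeam u (fun y => fderiv ℝ gU y v) = fun y => - gV y := funext key2
    rw [hfun] at hA
    have heq := hA.unique hgVd
    have happ := DFunLike.congr_fun heq u
    rw [ContinuousLinearMap.integral_apply
        (ray_integrable hun (hUc.continuous_fderiv (by norm_num)) (hUs.fderiv (𝕜 := ℝ)) x) u,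
      xbeam_fderiv_ray hun hUc hUs x] at happ
    simp only [ContinuousLinearMap.neg_apply, neg_inj] at happ
    exact happ
  -- Step 4: divergence vanishes
  have hdiv : ∀ x, fderiv ℝ f₁ x (1,0) + fderiv ℝ f₂ x (0,1) = 0 := by
    intro x
    have h3 := key3 x
    have egU : ∀ w, fderiv ℝ gU x w
        = (perp2 u).1 * fderiv ℝ f₁ x w + (perp2 u).2 * fderiv ℝ f₂ x w := by
      intro w
      rw [hgUdef, fderiv_fun_add ((hf₁d x).mul_const _) ((hf₂d x).mul_const _),
        fderiv_mul_const (hf₁d x), fderiv_mul_const (hf₂d x)]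
      simp [smul_eq_mul]
    have egV : ∀ w, fderiv ℝ gV x w
        = (perp2 v).1 * fderiv ℝ f₁ x w + (perp2 v).2 * fderiv ℝ f₂ x w := by
      intro w
      rw [hgVdef, fderiv_fun_add ((hf₁d x).mul_const _) ((hf₂d x).mul_const _),
        fderiv_mul_const (hf₁d x), fderiv_mul_const (hf₂d x)]
      simp [smul_eq_mul]
    rw [egU v, egV u, clm_expand (fderiv ℝ f₁ x) v, clm_expand (fderiv ℝ f₂ x) v,
      clm_expand (fderiv ℝ f₁ x) u, clm_expand (fderiv ℝ f₂ x) u] at h3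
    simp only [perp2] at h3
    have hfinal : (u.1 * v.2 - u.2 * v.1)
        * (fderiv ℝ f₁ x (1,0) + fderiv ℝ f₂ x (0,1)) = 0 := by linear_combination h3
    rcases mul_eq_zero.mp hfinal with h | h
    · exact absurd h hdet
    · exact h
  have hcurl' : ∀ x, fderiv ℝ f₂ x (1,0) = fderiv ℝ f₁ x (0,1) := by
    intro x
    have := hcurl x
    simp only [curlf] at this
    linarith
  -- Step 5: the complex function f₁ - i f₂ is entire and bounded
  set P : ℂ →L[ℝ] ℝ × ℝ := Complex.reCLM.prod Complex.imCLM with hPdef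
  set g : ℂ → ℂ := fun z => (f₁ (P z) : ℂ) - (f₂ (P z) : ℂ) * Complex.I with hgdef
  have hg' : ∀ z : ℂ, HasFDerivAt g
      ((Complex.ofRealCLM.comp ((fderiv ℝ f₁ (P z)).comp P)) -
        Complex.I • (Complex.ofRealCLM.comp ((fderiv ℝ f₂ (P z)).comp P))) z := by
    intro z
    have h1 : HasFDerivAt (fun w : ℂ => (f₁ (P w) : ℂ))
        (Complex.ofRealCLM.comp ((fderiv ℝ f₁ (P z)).comp P)) z :=
      (Complex.ofRealCLM.hasFDerivAt.comp _
        ((hf₁d (P z)).hasFDerivAt.comp z P.hasFDerivAt))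
    have h2 : HasFDerivAt (fun w : ℂ => (f₂ (P w) : ℂ))
        (Complex.ofRealCLM.comp ((fderiv ℝ f₂ (P z)).comp P)) z :=
      (Complex.ofRealCLM.hasFDerivAt.comp _
        ((hf₂d (P z)).hasFDerivAt.comp z P.hasFDerivAt))
    exact h1.sub (h2.mul_const Complex.I)
  have hgdiff : Differentiable ℂ g := by
    intro z
    have hB := hg' z
    rw [differentiableAt_iff_restrictScalars ℝ hB.differentiableAt]
    have ediv := hdiv (P z)
    have ecurl := hcurl' (P z)
    refine ⟨(ContinuousLinearMap.id ℂ ℂ).smulRight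
      ((fderiv ℝ f₁ (P z) (1,0) : ℂ) - (fderiv ℝ f₂ (P z) (1,0) : ℂ) * Complex.I), ?_⟩
    rw [hB.fderiv]
    refine ContinuousLinearMap.ext fun w => ?_
    have lhs : (((ContinuousLinearMap.id ℂ ℂ).smulRight
        ((fderiv ℝ f₁ (P z) (1,0) : ℂ) - (fderiv ℝ f₂ (P z) (1,0) : ℂ) * Complex.I)).restrictScalars ℝ) w
        = w * ((fderiv ℝ f₁ (P z) (1,0) : ℂ) - (fderiv ℝ f₂ (P z) (1,0) : ℂ) * Complex.I) := by
      simp [smul_eq_mul]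
    have rhs : (Complex.ofRealCLM.comp ((fderiv ℝ f₁ (P z)).comp P) -
        Complex.I • Complex.ofRealCLM.comp ((fderiv ℝ f₂ (P z)).comp P)) w
        = ((fderiv ℝ f₁ (P z)) (P w) : ℂ) - Complex.I * ((fderiv ℝ f₂ (P z)) (P w) : ℂ) := by
      simp [smul_eq_mul]
    rw [lhs, rhs, clm_expand (fderiv ℝ f₁ (P z)) (P w), clm_expand (fderiv ℝ f₂ (P z)) (P w)]
    have hPw1 : (P w).1 = w.re := rfl
    have hPw2 : (P w).2 = w.im := rfl
    rw [hPw1, hPw2]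
    have hb2 : fderiv ℝ f₂ (P z) (0,1) = - fderiv ℝ f₁ (P z) (1,0) := by linarith
    have ha2 : fderiv ℝ f₁ (P z) (0,1) = fderiv ℝ f₂ (P z) (1,0) := ecurl.symm
    rw [hb2, ha2]
    apply Complex.ext <;>
      simp only [Complex.mul_re, Complex.mul_im, Complex.sub_re, Complex.sub_im,
        Complex.add_re, Complex.add_im, Complex.ofReal_re, Complex.ofReal_im,
        Complex.I_re, Complex.I_im, Complex.mul_im] <;> ring
  have hbdd : Bornology.IsBounded (Set.range g) := by
    obtain ⟨C1, hC1⟩ := hf₁s.exists_bound_of_continuous hf₁c.continuous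
    obtain ⟨C2, hC2⟩ := hf₂s.exists_bound_of_continuous hf₂c.continuous
    rw [isBounded_iff_forall_norm_le]
    refine ⟨C1 + C2, ?_⟩
    rintro _ ⟨z, rfl⟩
    calc ‖g z‖ ≤ ‖(f₁ (P z) : ℂ)‖ + ‖(f₂ (P z) : ℂ) * Complex.I‖ := norm_sub_le _ _
      _ ≤ C1 + C2 := by
          rw [norm_mul, Complex.norm_I, mul_one, Complex.norm_real, Complex.norm_real]
          exact add_le_add (hC1 _) (hC2 _)
  -- far away g vanishes
  obtain ⟨N1, hN10, hN1⟩ := support_bound hf₁s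
  obtain ⟨N2, hN20, hN2⟩ := support_bound hf₂s
  have hfar : g ((N1 + N2 + 1 : ℝ) : ℂ) = 0 := by
    have hyval : P ((N1 + N2 + 1 : ℝ) : ℂ) = ((N1 + N2 + 1 : ℝ), (0:ℝ)) := by
      simp [hPdef]
    have hnorm : ∀ (N : ℝ), N < N1 + N2 + 1 → N < ‖((N1 + N2 + 1 : ℝ), (0:ℝ))‖ := by
      intro N hN
      have := norm_fst_le ((N1 + N2 + 1 : ℝ), (0:ℝ))
      simp only [Real.norm_eq_abs] at this
      calc N < N1 + N2 + 1 := hN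
        _ ≤ |N1 + N2 + 1| := le_abs_self _
        _ ≤ _ := this
    rw [hgdef]
    simp only [hyval]
    rw [hN1 _ (hnorm N1 (by linarith)), hN2 _ (hnorm N2 (by linarith))]
    simp
  have hzero : ∀ z, g z = 0 := by
    intro z
    rw [hgdiff.apply_eq_apply_of_bounded hbdd z ((N1 + N2 + 1 : ℝ) : ℂ)]
    exact hfar
  intro x
  have hz := hzero (Complex.ofReal x.1 + Complex.ofReal x.2 * Complex.I)
  have hPx : P (Complex.ofReal x.1 + Complex.ofReal x.2 * Complex.I) = x := by
    rw [hPdef]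
    apply Prod.ext <;> simp
  rw [hgdef] at hz
  simp only [hPx] at hz
  rw [Complex.ext_iff] at hz
  simp only [Complex.sub_re, Complex.sub_im, Complex.ofReal_re, Complex.ofReal_im,
    Complex.mul_re, Complex.mul_im, Complex.I_re, Complex.I_im, Complex.zero_re,
    Complex.zero_im] at hz
  obtain ⟨hz1, hz2⟩ := hz
  constructor <;> linarith
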